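/- Assume the Continuum Hypothesis (𝔠 = ℵ₁). Then GES fails: there exist a sequence ⟨f_n⟩ of functions [0,1] → ℝ converging pointwise to 0 and an η > 0 such that every subset A ⊆ [0,1] on which ⟨f_n⟩ converges uniformly has Lebesgue outer measure μ*(A) ≤ 1 − η. -/

import Mathlib

open MeasureTheory Filter Set Cardinal

/-- Auxiliary staircase sequence. -/
def stmt16Stairs (M : ℕ → ℕ) : ℕ → ℕ
  | 0 => 0
  | k + 1 => max (stmt16Stairs M k + 1) (M k)

/-- Given a countable family of functions tending to infinity, there is a function tending to
infinity which dips below each of them somewhere. -/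
lemma exists_tendsto_dips (C : Set (ℕ → ℕ)) (hC : C.Countable)
    (hinf : ∀ h ∈ C, Tendsto h atTop atTop) :
    ∃ g : ℕ → ℕ, Tendsto g atTop atTop ∧ ∀ h ∈ C, ∃ n, g n < h n := by
  classical
  rcases C.eq_empty_or_nonempty with rfl | hne
  · exact ⟨id, tendsto_id, by simp⟩
  obtain ⟨u, hu⟩ := hC.exists_eq_range hne
  have hu' : ∀ k, Tendsto (u k) atTop atTop := by
    intro k; exact hinf (u k) (hu ▸ mem_range_self k)
  have hM : ∀ k, ∃ M, ∀ n ≥ M, k + 2 ≤ u k n := by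
    intro k
    exact (eventually_atTop).1 ((hu' k).eventually_ge_atTop (k + 2))
  choose M hMspec using hM
  let N : ℕ → ℕ := stmt16Stairs M
  have hNsucc : ∀ k, N (k + 1) = max (N k + 1) (M k) := fun k => rfl
  have hNmono : StrictMono N := by
    apply strictMono_nat_of_lt_succ
    intro k
    rw [hNsucc]
    exact lt_of_lt_of_le (Nat.lt_succ_self _) (le_max_left _ _)
  have hNge : ∀ k, k ≤ N k := fun k => hNmono.le_apply
  let g : ℕ → ℕ := fun n => Nat.findGreatest (fun k => N k ≤ n) n
  refine ⟨g, ?_, ?_⟩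
  · refine tendsto_atTop.2 fun m => ?_
    filter_upwards [eventually_ge_atTop (max m (N m))] with n hn
    exact Nat.le_findGreatest (le_trans (le_trans (hNge m) (le_max_right m (N m))) hn)
      (le_trans (le_max_right m (N m)) hn)
  · intro h hh
    obtain ⟨k, rfl⟩ : ∃ k, u k = h := by
      rw [hu] at hh; obtain ⟨k, hk⟩ := hh; exact ⟨k, hk⟩
    refine ⟨N (k + 1), ?_⟩
    have h1 : g (N (k + 1)) ≤ k + 1 := by
      have hP : N (Nat.findGreatest (fun j => N j ≤ N (k + 1)) (N (k + 1))) ≤ N (k + 1) :=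
        Nat.findGreatest_spec (P := fun j => N j ≤ N (k + 1)) (hNge (k + 1)) le_rfl
      exact hNmono.le_iff_le.1 hP
    have h2 : k + 2 ≤ u k (N (k + 1)) := by
      apply hMspec k
      rw [hNsucc]; exact le_max_right _ _
    omega

/-- Under the Continuum Hypothesis (`𝔠 = ℵ₁`), `GES` fails: there are a
pointwise vanishing sequence of functions `[0,1] → ℝ` and an `η > 0` such that every set
on which the sequence converges uniformly has Lebesgue outer measure at most `1 - η`. -/
theorem stmt16 (hCH : Cardinal.continuum = Cardinal.aleph 1) :
    ∃ f : ℕ → ℝ → ℝ,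
      (∀ x ∈ Set.Icc (0:ℝ) 1, Tendsto (fun n => f n x) atTop (nhds 0)) ∧
      ∃ η : ℝ, 0 < η ∧
        ∀ A ⊆ Set.Icc (0:ℝ) 1, TendstoUniformlyOn f 0 atTop A →
          volume A ≤ ENNReal.ofReal (1 - η) := by
  classical
  -- `W` is a set of size ℵ₁ well-ordered with countable initial segments
  have hCH0 : Cardinal.continuum.{0} = Cardinal.aleph.{0} 1 := by
    apply Cardinal.lift_injective
    rw [Cardinal.lift_continuum, Cardinal.lift_aleph, Ordinal.lift_one]
    exact hCH
  let W : Type := (Cardinal.aleph.{0} 1).ord.ToType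
  have hWcard : #W = Cardinal.aleph 1 := by
    rw [Cardinal.mk_toType, Cardinal.card_ord]
  have hIcard : #(Set.Icc (0:ℝ) 1) = Cardinal.aleph 1 := by
    rw [Cardinal.mk_Icc_real (by norm_num : (0:ℝ) < 1), hCH0]
  obtain ⟨e⟩ : Nonempty (Set.Icc (0:ℝ) 1 ≃ W) :=
    Cardinal.eq.mp (hIcard.trans hWcard.symm)
  -- `D` is the set of functions tending to infinity; it has size at most ℵ₁
  let D := {h : ℕ → ℕ // Tendsto h atTop atTop}
  have hDcard : #D ≤ Cardinal.aleph 1 := by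
    calc #D ≤ #(ℕ → ℕ) := Cardinal.mk_subtype_le _
    _ = ℵ₀ ^ ℵ₀ := by rw [← Cardinal.power_def, Cardinal.mk_nat]
    _ = Cardinal.continuum := Cardinal.aleph0_power_aleph0
    _ = Cardinal.aleph 1 := hCH0
  have : Nonempty D := ⟨⟨id, tendsto_id⟩⟩
  obtain ⟨emb⟩ : Nonempty (D ↪ W) := Cardinal.le_def D W |>.1 (hDcard.trans_eq hWcard.symm)
  let φ : W → D := Function.invFun emb
  have hφ : Function.Surjective φ := Function.invFun_surjective emb.injective
  -- countability of initial segments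
  have hIio : ∀ α : W, (Set.Iio α).Countable := fun α =>
    (Cardinal.countable_iff_lt_aleph_one _).2 (Cardinal.mk_Iio_ord_toType α)
  -- choose the slow functions
  have hG : ∀ α : W, ∃ g : ℕ → ℕ, Tendsto g atTop atTop ∧
      ∀ β : W, β < α → ∃ n, g n < (φ β).1 n := by
    intro α
    obtain ⟨g, hg1, hg2⟩ := exists_tendsto_dips ((fun β => (φ β).1) '' (Set.Iio α))
      ((hIio α).image _) (by rintro h ⟨β, _, rfl⟩; exact (φ β).2)
    exact ⟨g, hg1, fun β hβ => hg2 _ ⟨β, hβ, rfl⟩⟩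
  choose G hG1 hG2 using hG
  refine ⟨fun n x => if hx : x ∈ Set.Icc (0:ℝ) 1 then ((G (e ⟨x, hx⟩) n : ℝ) + 1)⁻¹ else 0,
    ?_, 1/2, by norm_num, ?_⟩
  · -- pointwise convergence
    intro x hx
    simp only [dif_pos hx]
    have h1 : Tendsto (fun n => ((G (e ⟨x, hx⟩) n : ℝ) + 1)) atTop atTop :=
      tendsto_atTop_add_const_right _ _ (tendsto_natCast_atTop_atTop.comp (hG1 _))
    exact h1.inv_tendsto_atTop
  · -- every set of uniform convergence is countable, hence null
    intro A hA hun
    have hcnt : A.Countable := by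
      rcases A.eq_empty_or_nonempty with rfl | ⟨a0, ha0⟩
      · exact countable_empty
      · set B : Set W := {α | ((e.symm α : Set.Icc (0:ℝ) 1) : ℝ) ∈ A} with hB
        have hBne : B.Nonempty := by
          refine ⟨e ⟨a0, hA ha0⟩, ?_⟩
          simp only [hB, mem_setOf_eq, Equiv.symm_apply_apply]
          exact ha0
        set h : ℕ → ℕ := fun n => sInf ((fun α => G α n) '' B) with hh
        have hmem : ∀ n, ∃ α ∈ B, G α n = h n := by
          intro n
          have := Nat.sInf_mem (hBne.image (fun α => G α n))
          obtain ⟨α, hα, hα2⟩ := this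
          exact ⟨α, hα, hα2⟩
        have hle : ∀ n, ∀ α ∈ B, h n ≤ G α n := fun n α hα => Nat.sInf_le ⟨α, hα, rfl⟩
        have hval : ∀ n (α : W), α ∈ B →
            (if hx : ((e.symm α : Set.Icc (0:ℝ) 1) : ℝ) ∈ Set.Icc (0:ℝ) 1 then
              ((G (e ⟨((e.symm α : Set.Icc (0:ℝ) 1) : ℝ), hx⟩) n : ℝ) + 1)⁻¹ else 0)
            = ((G α n : ℝ) + 1)⁻¹ := by
          intro n α _
          rw [dif_pos (e.symm α).2]
          congr 2
          rw [Subtype.coe_eta, Equiv.apply_symm_apply]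
        have hht : Tendsto h atTop atTop := by
          refine tendsto_atTop.2 fun m => ?_
          have hε : (0:ℝ) < ((m : ℝ) + 1)⁻¹ := by positivity
          filter_upwards [(Metric.tendstoUniformlyOn_iff.1 hun) _ hε] with n hn
          obtain ⟨α, hα, hαn⟩ := hmem n
          have h2 := hn _ hα
          rw [hval n α hα] at h2
          have h3 : dist ((0 : ℝ → ℝ) ((e.symm α : Set.Icc (0:ℝ) 1) : ℝ)) (((G α n : ℝ) + 1)⁻¹)
              = ((G α n : ℝ) + 1)⁻¹ := by
            simp [Real.dist_eq, abs_of_nonneg, inv_nonneg.2 (by positivity : (0:ℝ) ≤ (G α n : ℝ) + 1)]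
          rw [h3] at h2
          have h4 : (m : ℝ) < (G α n : ℝ) := by
            have hpos : (0:ℝ) < (G α n : ℝ) + 1 := by positivity
            have := (inv_lt_inv₀ hpos (by positivity : (0:ℝ) < (m:ℝ)+1)).1 h2
            linarith
          have h5 : m ≤ G α n := by exact_mod_cast h4.le
          omega
        obtain ⟨ξ, hξ⟩ := hφ ⟨h, hht⟩
        have hBsub : B ⊆ Set.Iic ξ := by
          intro α hα
          by_contra hc
          obtain ⟨n, hn⟩ := hG2 α ξ (lt_of_not_ge hc)
          rw [hξ] at hn
          exact absurd (hle n α hα) (not_le.2 hn)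
        have hIic : (Set.Iic ξ).Countable := by
          have : Set.Iic ξ = Set.Iio ξ ∪ {ξ} := (Set.Iio_union_right).symm
          rw [this]
          exact (hIio ξ).union (countable_singleton ξ)
        have hBc : B.Countable := hIic.mono hBsub
        have hAsub : A ⊆ (fun α => ((e.symm α : Set.Icc (0:ℝ) 1) : ℝ)) '' B := by
          intro a ha
          refine ⟨e ⟨a, hA ha⟩, ?_, ?_⟩
          · simp only [hB, mem_setOf_eq, Equiv.symm_apply_apply]; exact ha
          · simp only [Equiv.symm_apply_apply]
        exact (hBc.image _).mono hAsub
    have h0 : volume A = 0 := hcnt.measure_zero _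
    rw [h0]
    exact zero_le
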